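/- For all s ∈ (0,1) and constant p ∈ (0, 1/2], there exists c > 0 such that with probability tending to 1 as n → ∞, any two distinct satisfying assignments of the random XOR-formula Q^p(n, sn) differ on at least c·n variables (i.e., the solution space is Ω(n)-separated). -/

import Mathlib

open MeasureTheory Filter

/-- The Bernoulli measure on `Bool` with parameter `p` (truncated to `[0,1]`). -/
noncomputable def bern (p : ℝ) : Measure Bool :=
  (PMF.bernoulli (min (Real.toNNReal p) 1) (min_le_right _ _)).toMeasure

instance (p : ℝ) : IsProbabilityMeasure (bern p) := PMF.toMeasure.isProbabilityMeasure _

/-- A random XOR-clause over `n` variables: each variable is included independently with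
probability `p`, and the constant bit `1` is included with probability `1/2`. -/
noncomputable def clauseM (n : ℕ) (p : ℝ) : Measure ((Fin n → Bool) × Bool) :=
  (Measure.pi fun _ : Fin n => bern p).prod (bern (1/2))

instance (n : ℕ) (p : ℝ) : IsProbabilityMeasure (clauseM n p) := by
  unfold clauseM; infer_instance

/-- The random XOR-formula `Q^p(n, m)`: `m` independent random XOR-clauses. -/
noncomputable def formulaM (n m : ℕ) (p : ℝ) : Measure (Fin m → (Fin n → Bool) × Bool) :=
  Measure.pi fun _ : Fin m => clauseM n p

/-- An XOR-clause `(S, b)` is satisfied by `σ` iff the number of included variables set to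
true, plus the constant bit, is odd. -/
def xorSat {n : ℕ} (c : (Fin n → Bool) × Bool) (σ : Fin n → Bool) : Prop :=
  Odd ((∑ i, if c.1 i && σ i then (1 : ℕ) else 0) + (if c.2 then 1 else 0))

lemma bern_singleton (p : ℝ) (hp0 : 0 ≤ p) (hp1 : p ≤ 1) (b : Bool) :
    bern p {b} = ENNReal.ofReal (if b then p else 1 - p) := by
  rw [bern, PMF.toMeasure_apply_singleton _ _ (measurableSet_singleton b)]
  have hmin : min (Real.toNNReal p) 1 = Real.toNNReal p :=
    min_eq_left (Real.toNNReal_le_one.mpr hp1)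
  rw [PMF.bernoulli_apply, hmin]
  cases b
  · simp only [Bool.cond_false, if_neg (by simp : ¬ (false = true))]
    rw [ENNReal.ofReal_sub _ hp0, ENNReal.ofReal_one, ENNReal.coe_sub, ENNReal.coe_one]; rfl
  · simp [ENNReal.ofReal]

-- weight of a boolean vector
def wt {n : ℕ} (D : Fin n → Bool) : ℕ := (Finset.univ.filter fun i => D i = true).card

lemma measure_pi_bern_eq (n : ℕ) (p : ℝ) (hp0 : 0 ≤ p) (hp1 : p ≤ 1)
    (Q : (Fin n → Bool) → Prop) [DecidablePred Q] :
    (Measure.pi fun _ : Fin n => bern p) {S | Q S}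
      = ENNReal.ofReal (∑ S ∈ Finset.univ.filter Q, ∏ i, (if S i then p else 1 - p)) := by
  have hset : {S : Fin n → Bool | Q S} = ⋃ S ∈ Finset.univ.filter Q, {S} := by
    ext S; simp
  rw [hset, measure_biUnion_finset ?hd fun S _ => measurableSet_singleton S]
  case hd =>
    intro a _ b _ hab
    simp [Function.onFun, Set.disjoint_singleton, hab]
  rw [ENNReal.ofReal_sum_of_nonneg]
  · refine Finset.sum_congr rfl fun S _ => ?_
    rw [← Set.univ_pi_singleton S, Measure.pi_pi, ENNReal.ofReal_prod_of_nonneg]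
    · refine Finset.prod_congr rfl fun i _ => ?_
      rw [bern_singleton p hp0 hp1]
    · intro i _
      split <;> [exact hp0; linarith]
  · intro S _
    exact Finset.prod_nonneg fun i _ => by split <;> [exact hp0; linarith]

lemma sum_w_even_le (n : ℕ) (p : ℝ) (hp0 : 0 < p) (hp2 : p ≤ 1/2) (D : Fin n → Bool)
    (hD : 1 ≤ wt D) :
    ∑ S ∈ Finset.univ.filter
        (fun S : Fin n → Bool => Even (∑ i, if S i && D i then (1:ℕ) else 0)),
      ∏ i, (if S i then p else 1 - p) ≤ 1 - p := by
  have key : ∀ g : Fin n → Bool → ℝ,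
      ∑ S : Fin n → Bool, ∏ i, g i (S i) = ∏ i, (g i true + g i false) := by
    intro g
    rw [show (Finset.univ : Finset (Fin n → Bool)) = Fintype.piFinset (fun _ => Finset.univ)
      from (Fintype.piFinset_univ).symm, ← Finset.prod_univ_sum]
    exact Finset.prod_congr rfl fun i _ => by simp
  have h1 : ∑ S : Fin n → Bool, ∏ i, (if S i then p else 1 - p) = 1 := by
    rw [key (fun i b => if b then p else 1 - p)]
    simp
  have hchi : ∀ S : Fin n → Bool, ∏ i, (if S i && D i then (-1:ℝ) else 1)
      = (-1 : ℝ) ^ (∑ i, if S i && D i then (1:ℕ) else 0) := by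
    intro S
    rw [← Finset.prod_pow_eq_pow_sum]
    exact Finset.prod_congr rfl fun i _ => by by_cases h : (S i && D i) = true <;> simp [h]
  have hX : ∑ S : Fin n → Bool,
      (∏ i, (if S i then p else 1 - p)) * (∏ i, (if S i && D i then (-1:ℝ) else 1))
      = (1 - 2*p) ^ (wt D) := by
    simp_rw [← Finset.prod_mul_distrib]
    rw [key (fun i b => (if b then p else 1 - p) * (if b && D i then (-1:ℝ) else 1))]
    have : ∀ i : Fin n, ((if true then p else 1 - p) * (if true && D i then (-1:ℝ) else 1)
        + (if false then p else 1 - p) * (if false && D i then (-1:ℝ) else 1))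
        = if D i = true then 1 - 2*p else 1 := by
      intro i; by_cases h : D i = true <;> simp [h] <;> ring
    rw [Finset.prod_congr rfl fun i _ => this i, ← Finset.prod_filter_mul_prod_filter_not
      Finset.univ (fun i => D i = true)]
    rw [Finset.prod_congr rfl (fun i hi => if_pos (Finset.mem_filter.mp hi).2),
      Finset.prod_const]
    rw [Finset.prod_congr rfl (fun i hi => if_neg (Finset.mem_filter.mp hi).2),
      Finset.prod_const_one, mul_one]
    rfl
  have h2 : ∑ S : Fin n → Bool, (∏ i, (if S i then p else 1 - p))
      * (1 + ∏ i, (if S i && D i then (-1:ℝ) else 1)) = 1 + (1 - 2*p) ^ (wt D) := by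
    simp_rw [mul_add, mul_one, Finset.sum_add_distrib, h1, hX]
  have h3 : ∑ S ∈ Finset.univ.filter
        (fun S : Fin n → Bool => Even (∑ i, if S i && D i then (1:ℕ) else 0)),
      ∏ i, (if S i then p else 1 - p) = (1 + (1 - 2*p) ^ (wt D)) / 2 := by
    rw [Finset.sum_filter, ← h2, Finset.sum_div]
    refine Finset.sum_congr rfl fun S _ => ?_
    rcases Nat.even_or_odd (∑ i, if S i && D i then (1:ℕ) else 0) with he | ho
    · rw [if_pos he, hchi S, he.neg_one_pow]; ring
    · rw [if_neg (Nat.not_even_iff_odd.mpr ho), hchi S, ho.neg_one_pow]; ring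
  rw [h3]
  have hle : (1 - 2*p) ^ (wt D) ≤ (1 - 2*p) ^ 1 :=
    pow_le_pow_of_le_one (by linarith) (by linarith) hD
  rw [pow_one] at hle
  linarith

lemma clause_bad_le (n : ℕ) (p : ℝ) (hp0 : 0 < p) (hp2 : p ≤ 1/2) (D : Fin n → Bool)
    (hD : 1 ≤ wt D) :
    clauseM n p {c | Even (∑ i, if c.1 i && D i then (1:ℕ) else 0)}
      ≤ ENNReal.ofReal (1 - p) := by
  have hset : {c : (Fin n → Bool) × Bool | Even (∑ i, if c.1 i && D i then (1:ℕ) else 0)}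
      = {S : Fin n → Bool | Even (∑ i, if S i && D i then (1:ℕ) else 0)} ×ˢ Set.univ := by
    ext ⟨S, b⟩; simp
  rw [clauseM, hset, Measure.prod_prod, measure_univ, mul_one,
    measure_pi_bern_eq n p hp0.le (by linarith) _]
  exact ENNReal.ofReal_le_ofReal (sum_w_even_le n p hp0 hp2 D hD)

lemma formula_bad_le (n m : ℕ) (p : ℝ) (hp0 : 0 < p) (hp2 : p ≤ 1/2) (D : Fin n → Bool)
    (hD : 1 ≤ wt D) :
    formulaM n m p {Q | ∀ j, Even (∑ i, if (Q j).1 i && D i then (1:ℕ) else 0)}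
      ≤ ENNReal.ofReal (1 - p) ^ m := by
  have hset : {Q : Fin m → (Fin n → Bool) × Bool |
        ∀ j, Even (∑ i, if (Q j).1 i && D i then (1:ℕ) else 0)}
      = Set.pi Set.univ
        (fun _ : Fin m => {c : (Fin n → Bool) × Bool
          | Even (∑ i, if c.1 i && D i then (1:ℕ) else 0)}) := by
    ext Q; simp [Set.mem_univ_pi]
  rw [formulaM, hset, Measure.pi_pi]
  calc ∏ _j : Fin m, clauseM n p {c | Even (∑ i, if c.1 i && D i then (1:ℕ) else 0)}
      ≤ ∏ _j : Fin m, ENNReal.ofReal (1 - p) :=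
        Finset.prod_le_prod' fun j _ => clause_bad_le n p hp0 hp2 D hD
    _ = ENNReal.ofReal (1 - p) ^ m := by simp

lemma card_wt_eq_le (n d : ℕ) :
    (Finset.univ.filter fun D : Fin n → Bool => wt D = d).card ≤ n.choose d := by
  have h := Finset.card_le_card_of_injOn
    (f := fun D : Fin n → Bool => Finset.univ.filter fun i => D i = true)
    (s := Finset.univ.filter fun D : Fin n → Bool => wt D = d)
    (t := Finset.powersetCard d (Finset.univ : Finset (Fin n)))
    (fun D hD => by
      rw [Finset.mem_coe, Finset.mem_powersetCard]
      exact ⟨Finset.filter_subset _ _ |>.trans (by simp), (Finset.mem_filter.mp (Finset.mem_coe.mp hD)).2⟩)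
    (fun D _ D' _ h => by
      funext i
      have := Finset.ext_iff.mp h i
      simp only [Finset.mem_filter, Finset.mem_univ, true_and] at this
      cases hD : D i <;> cases hD' : D' i <;> simp_all)
  simpa using h

lemma card_small_wt_le (n K : ℕ) :
    (Finset.univ.filter fun D : Fin n → Bool => 1 ≤ wt D ∧ wt D ≤ K).card
      ≤ ∑ d ∈ Finset.range (K+1), n.choose d := by
  classical
  calc (Finset.univ.filter fun D : Fin n → Bool => 1 ≤ wt D ∧ wt D ≤ K).card
      = ∑ d ∈ Finset.range (K+1),
        ((Finset.univ.filter fun D : Fin n → Bool => 1 ≤ wt D ∧ wt D ≤ K).filter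
          fun D => wt D = d).card := by
        refine Finset.card_eq_sum_card_fiberwise fun D hD => ?_
        simp only [Finset.mem_coe, Finset.mem_filter] at hD
        exact Finset.mem_range.mpr (Nat.lt_succ_of_le hD.2.2)
    _ ≤ ∑ d ∈ Finset.range (K+1), n.choose d := by
        refine Finset.sum_le_sum fun d _ => ?_
        refine le_trans (Finset.card_le_card ?_) (card_wt_eq_le n d)
        intro D hD
        simp only [Finset.mem_filter] at hD ⊢
        tauto

lemma factorial_le_aux (d K n : ℕ) (hdK : d ≤ K) (hKn : K ≤ n) :
    K.factorial ≤ d.factorial * n ^ (K - d) := by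
  induction K, hdK using Nat.le_induction with
  | base => simp
  | succ K hdK ih =>
    have hKn' : K ≤ n := le_trans (Nat.le_succ K) hKn
    calc (K+1).factorial = (K+1) * K.factorial := rfl
      _ ≤ n * (d.factorial * n ^ (K - d)) := Nat.mul_le_mul hKn (ih hKn')
      _ = d.factorial * n ^ (K + 1 - d) := by
          rw [Nat.succ_sub hdK, pow_succ]; ring

lemma choose_mul_factorial_le (n d K : ℕ) (hdK : d ≤ K) (hKn : K ≤ n) :
    n.choose d * K.factorial ≤ n ^ K := by
  calc n.choose d * K.factorial ≤ n.choose d * (d.factorial * n ^ (K - d)) :=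
        Nat.mul_le_mul_left _ (factorial_le_aux d K n hdK hKn)
    _ = (d.factorial * n.choose d) * n ^ (K - d) := by ring
    _ ≤ n ^ d * n ^ (K - d) := by
        rw [← Nat.descFactorial_eq_factorial_mul_choose]
        exact Nat.mul_le_mul_right _ (Nat.descFactorial_le_pow n d)
    _ = n ^ K := by rw [← pow_add, Nat.add_sub_cancel' hdK]

lemma count_mul_factorial_le (n K : ℕ) (hKn : K ≤ n) :
    (Finset.univ.filter fun D : Fin n → Bool => 1 ≤ wt D ∧ wt D ≤ K).card * K.factorial
      ≤ (K+1) * n ^ K := by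
  calc _ ≤ (∑ d ∈ Finset.range (K+1), n.choose d) * K.factorial :=
        Nat.mul_le_mul_right _ (card_small_wt_le n K)
    _ = ∑ d ∈ Finset.range (K+1), n.choose d * K.factorial := by rw [Finset.sum_mul]
    _ ≤ ∑ _d ∈ Finset.range (K+1), n ^ K := by
        refine Finset.sum_le_sum fun d hd => ?_
        exact choose_mul_factorial_le n d K (Nat.lt_succ_iff.mp (Finset.mem_range.mp hd)) hKn
    _ = (K+1) * n ^ K := by simp [mul_comm]
lemma parity_step {n : ℕ} (c : (Fin n → Bool) × Bool) (σ τ : Fin n → Bool)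
    (hσ : xorSat c σ) (hτ : xorSat c τ) :
    Even (∑ i, if c.1 i && (σ i != τ i) then (1:ℕ) else 0) := by
  have hodd : ∀ k : ℕ, Odd k → (k : ZMod 2) = 1 := by
    rintro k ⟨j, rfl⟩
    push_cast
    have h2 : (2 : ZMod 2) = 0 := rfl
    rw [h2]; ring
  have hcast : ∀ f : Fin n → Bool,
      ((∑ i, if f i then (1:ℕ) else 0 : ℕ) : ZMod 2)
        = ∑ i, (if f i then (1:ZMod 2) else 0) := by
    intro f; push_cast; rfl
  rw [even_iff_two_dvd, ← ZMod.natCast_eq_zero_iff]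
  have e1 := hodd _ hσ
  have e2 := hodd _ hτ
  rw [Nat.cast_add, hcast] at e1 e2
  rw [hcast]
  have hpt : ∀ i, (if c.1 i && (σ i != τ i) then (1:ZMod 2) else 0)
      = (if c.1 i && σ i then (1:ZMod 2) else 0) + (if c.1 i && τ i then (1:ZMod 2) else 0) := by
    intro i; cases c.1 i <;> cases σ i <;> cases τ i <;> decide
  rw [Finset.sum_congr rfl fun i _ => hpt i, Finset.sum_add_distrib]
  set B : ZMod 2 := ((if c.2 then (1:ℕ) else 0 : ℕ) : ZMod 2)
  have hB2 : B + B = 0 := by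
    simp only [B]; cases c.2 <;> decide
  have h2 : (2 : ZMod 2) = 0 := rfl
  linear_combination e1 + e2 - hB2 + h2

lemma tendsto_u (s p c : ℝ) (hs0 : 0 < s) (hp0 : 0 < p) (hp1 : p < 1)
    (hc0 : 0 < c) (hc2 : c ≤ 1/2)
    (hγ : (2 * Real.exp 1 / c) ^ c * (1-p) ^ s < 1) :
    Tendsto (fun n : ℕ =>
      ((Finset.univ.filter fun D : Fin n → Bool =>
          1 ≤ wt D ∧ wt D ≤ ⌊c * (n:ℝ)⌋₊).card : ℝ) * (1-p) ^ (⌈s * (n:ℝ)⌉₊ : ℕ))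
      atTop (nhds 0) := by
  set a : ℝ := 2 * Real.exp 1 / c with ha_def
  set γ : ℝ := a ^ c * (1-p) ^ s with hγ_def
  have hp1' : (0:ℝ) < 1 - p := by linarith
  have ha1 : 1 ≤ a := by
    rw [ha_def, le_div_iff₀ hc0, one_mul]
    have := Real.add_one_le_exp (0:ℝ)
    nlinarith [Real.exp_pos (1:ℝ), Real.exp_one_gt_d9]
  have ha0 : 0 ≤ a := le_trans zero_le_one ha1
  have hγ0 : 0 ≤ γ := mul_nonneg (Real.rpow_nonneg ha0 _) (Real.rpow_nonneg hp1'.le _)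
  -- the dominating sequence tends to zero
  have hdom : Tendsto (fun n : ℕ => (c * n + 1) * γ ^ n) atTop (nhds 0) := by
    have hnorm : ‖γ‖ < 1 := by rwa [Real.norm_eq_abs, abs_of_nonneg hγ0]
    have h1 : Tendsto (fun n : ℕ => (n:ℝ) ^ 1 * γ ^ n) atTop (nhds 0) :=
      ((summable_norm_pow_mul_geometric_of_norm_lt_one 1 hnorm).of_norm).tendsto_atTop_zero
    have h0 : Tendsto (fun n : ℕ => γ ^ n) atTop (nhds 0) :=
      tendsto_pow_atTop_nhds_zero_of_norm_lt_one hnorm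
    have := (tendsto_const_nhds (x := c) (f := atTop)).mul h1 |>.add h0
    simp only [mul_zero, zero_add] at this
    convert this using 2 with n
    ring
  refine squeeze_zero' (Eventually.of_forall fun n => ?_) ?_ hdom
  · exact mul_nonneg (Nat.cast_nonneg _) (pow_nonneg (by linarith) _)
  · have hev : ∀ᶠ n : ℕ in atTop, 2 ≤ c * (n:ℝ) := by
      rw [eventually_atTop]
      refine ⟨⌈(2/c : ℝ)⌉₊, fun n hn => ?_⟩
      have h1 : (2/c : ℝ) ≤ (n:ℝ) := le_trans (Nat.le_ceil _) (Nat.cast_le.mpr hn)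
      rw [div_le_iff₀ hc0] at h1
      linarith
    filter_upwards [hev] with n hcn
    set K := ⌊c * (n:ℝ)⌋₊ with hK_def
    set m := ⌈s * (n:ℝ)⌉₊ with hm_def
    have hcn0 : (0:ℝ) ≤ c * n := by linarith
    have hKcn : (K:ℝ) ≤ c * n := Nat.floor_le hcn0
    have hKlow : c * n ≤ 2 * K := by
      have := Nat.sub_one_lt_floor (c * (n:ℝ))
      rw [← hK_def] at this
      linarith
    have hKn : K ≤ n := by
      have hn' : c * (n:ℝ) ≤ n := by nlinarith [Nat.cast_nonneg (α := ℝ) n]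
      exact_mod_cast Nat.cast_le.mp (le_trans hKcn hn')
    -- card bound
    have hcard : ((Finset.univ.filter fun D : Fin n → Bool =>
        1 ≤ wt D ∧ wt D ≤ K).card : ℝ) ≤ ((K:ℝ)+1) * (n:ℝ)^K / (K.factorial) := by
      rw [le_div_iff₀ (by exact_mod_cast K.factorial_pos)]
      have := count_mul_factorial_le n K hKn
      exact_mod_cast this
    have hfact : ((K:ℝ))^K / (K.factorial) ≤ Real.exp 1 ^ K := by
      have := Real.pow_div_factorial_le_exp (x := (K:ℝ)) (Nat.cast_nonneg K) K
      rwa [show Real.exp (K:ℝ) = Real.exp 1 ^ K by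
        rw [← Real.exp_nat_mul]; norm_num] at this
    have hnK : (n:ℝ)^K ≤ (2/c)^K * (K:ℝ)^K := by
      rw [← mul_pow]
      refine pow_le_pow_left₀ (Nat.cast_nonneg n) ?_ K
      rw [div_mul_eq_mul_div, le_div_iff₀ hc0]
      nlinarith
    have hbound1 : ((Finset.univ.filter fun D : Fin n → Bool =>
        1 ≤ wt D ∧ wt D ≤ K).card : ℝ) ≤ ((K:ℝ)+1) * a ^ K := by
      refine le_trans hcard ?_
      rw [mul_div_assoc]
      refine mul_le_mul_of_nonneg_left ?_ (by positivity)
      calc (n:ℝ)^K / K.factorial ≤ ((2/c)^K * (K:ℝ)^K) / K.factorial := by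
            gcongr
        _ = (2/c)^K * ((K:ℝ)^K / K.factorial) := by ring
        _ ≤ (2/c)^K * Real.exp 1 ^ K :=
            mul_le_mul_of_nonneg_left hfact (by positivity)
        _ = a ^ K := by rw [← mul_pow]; congr 1; rw [ha_def]; ring
    have haK : a ^ K ≤ (a ^ c) ^ n := by
      have h1 : a ^ K = a ^ ((K:ℝ) : ℝ) := by rw [Real.rpow_natCast]
      have h2 : a ^ ((K:ℝ)) ≤ a ^ (c * n) :=
        Real.rpow_le_rpow_of_exponent_le ha1 hKcn
      have h3 : a ^ (c * (n:ℝ)) = (a ^ c) ^ n := by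
        rw [Real.rpow_mul ha0, Real.rpow_natCast]
      rw [h1]; rw [h3] at h2; exact h2
    have hpm : (1-p) ^ (m:ℕ) ≤ ((1-p) ^ s) ^ n := by
      have h1 : (1-p) ^ (m:ℕ) = (1-p) ^ ((m:ℝ)) := by rw [Real.rpow_natCast]
      have h2 : (1-p) ^ ((m:ℝ)) ≤ (1-p) ^ (s * n) :=
        Real.rpow_le_rpow_of_exponent_ge hp1' (by linarith) (Nat.le_ceil _)
      have h3 : (1-p) ^ (s * (n:ℝ)) = ((1-p) ^ s) ^ n := by
        rw [Real.rpow_mul hp1'.le, Real.rpow_natCast]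
      rw [h1]; rw [h3] at h2; exact h2
    calc ((Finset.univ.filter fun D : Fin n → Bool =>
          1 ≤ wt D ∧ wt D ≤ K).card : ℝ) * (1-p) ^ (m:ℕ)
        ≤ (((K:ℝ)+1) * (a ^ c) ^ n) * (((1-p) ^ s) ^ n) := by
          refine mul_le_mul ?_ hpm (by positivity) ?_
          · exact le_trans hbound1 (mul_le_mul_of_nonneg_left haK (by positivity))
          · positivity
      _ ≤ ((c * n + 1) * (a ^ c) ^ n) * (((1-p) ^ s) ^ n) := by
          have h6 : ((K:ℝ)+1) ≤ c * n + 1 := by linarith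
          gcongr
      _ = (c * n + 1) * γ ^ n := by rw [hγ_def, mul_pow]; ring

lemma exists_c (s p : ℝ) (hs0 : 0 < s) (hp0 : 0 < p) (hp1 : p < 1) :
    ∃ c : ℝ, 0 < c ∧ c ≤ 1/2 ∧ (2 * Real.exp 1 / c) ^ c * (1-p) ^ s < 1 := by
  have h1p : (0:ℝ) < 1 - p := by linarith
  have hlog : Real.log (1-p) < 0 := Real.log_neg h1p (by linarith)
  set L : ℝ := -(s * Real.log (1-p)) with hL_def
  have hL : 0 < L := by rw [hL_def]; nlinarith
  set c : ℝ := min (1/2) ((L/5)^2) with hc_def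
  have hc0 : 0 < c := lt_min (by norm_num) (by positivity)
  have hchalf : c ≤ 1/2 := min_le_left _ _
  have hcL : c ≤ (L/5)^2 := min_le_right _ _
  have hc1 : c ≤ 1 := hchalf.trans (by norm_num)
  have hsc0 : 0 < Real.sqrt c := Real.sqrt_pos.mpr hc0
  have hsqc : Real.sqrt c ≤ L/5 := by
    calc Real.sqrt c ≤ Real.sqrt ((L/5)^2) := Real.sqrt_le_sqrt hcL
      _ = L/5 := Real.sqrt_sq (by positivity)
  have hsc1 : Real.sqrt c ≤ 1 := by
    rw [show (1:ℝ) = Real.sqrt 1 by simp]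
    exact Real.sqrt_le_sqrt hc1
  have hcsq : c ≤ Real.sqrt c := by
    nlinarith [Real.sq_sqrt hc0.le, Real.sqrt_nonneg c]
  have ha0 : (0:ℝ) < 2 * Real.exp 1 / c := by positivity
  have hloga : Real.log (2 * Real.exp 1 / c) ≤ 2 + 2 / Real.sqrt c := by
    rw [Real.log_div (by positivity) hc0.ne', Real.log_mul two_ne_zero (Real.exp_ne_zero 1),
      Real.log_exp]
    have h2 : Real.log 2 ≤ 1 := by
      have := Real.log_le_sub_one_of_pos (zero_lt_two (α := ℝ))
      linarith
    have hclog : - Real.log c ≤ 2 / Real.sqrt c := by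
      have hs' : Real.log (Real.sqrt c) = Real.log c / 2 := Real.log_sqrt hc0.le
      have h3 : Real.log (1 / Real.sqrt c) ≤ 1 / Real.sqrt c - 1 :=
        Real.log_le_sub_one_of_pos (by positivity)
      rw [Real.log_div one_ne_zero hsc0.ne', Real.log_one, hs'] at h3
      have h4 : (2:ℝ) / Real.sqrt c = 2 * (1 / Real.sqrt c) := by ring
      rw [h4]
      linarith
    linarith
  have hcdiv : c / Real.sqrt c = Real.sqrt c := by
    rw [eq_comm, eq_div_iff hsc0.ne', Real.mul_self_sqrt hc0.le]
  have hkey : c * Real.log (2 * Real.exp 1 / c) < L := by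
    have h5 : c * Real.log (2 * Real.exp 1 / c) ≤ c * (2 + 2 / Real.sqrt c) :=
      mul_le_mul_of_nonneg_left hloga hc0.le
    have h6 : c * (2 + 2 / Real.sqrt c) = 2*c + 2*(c / Real.sqrt c) := by ring
    rw [h6, hcdiv] at h5
    linarith
  refine ⟨c, hc0, hchalf, ?_⟩
  rw [Real.rpow_def_of_pos ha0, Real.rpow_def_of_pos h1p, ← Real.exp_add]
  refine Real.exp_lt_one_iff.mpr ?_
  rw [hL_def] at hkey
  nlinarith [hkey]

instance (n m : ℕ) (p : ℝ) : IsProbabilityMeasure (formulaM n m p) := by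
  unfold formulaM; infer_instance

/-- For all `s ∈ (0,1)` and constant `p ∈ (0,1/2]`, there is `c > 0` such that w.h.p.
any two distinct satisfying assignments of `Q^p(n, sn)` differ on at least `c·n`
variables. -/
theorem whp_linearly_separated_const (s p : ℝ)
    (hs : s ∈ Set.Ioo (0:ℝ) 1) (hp : p ∈ Set.Ioc (0:ℝ) (1/2)) :
    ∃ c : ℝ, 0 < c ∧
      Tendsto (fun n : ℕ =>
        formulaM n ⌈s * (n:ℝ)⌉₊ p
          {Q | ∀ σ τ : Fin n → Bool, (∀ j, xorSat (Q j) σ) → (∀ j, xorSat (Q j) τ) →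
            σ ≠ τ → c * n ≤ (hammingDist σ τ : ℝ)})
        atTop (nhds 1) := by
  obtain ⟨hs0, hs1⟩ := hs
  obtain ⟨hp0, hp2⟩ := hp
  have hp1 : p < 1 := lt_of_le_of_lt hp2 (by norm_num)
  obtain ⟨c, hc0, hchalf, hγ⟩ := exists_c s p hs0 hp0 hp1
  refine ⟨c, hc0, ?_⟩
  have hcompl : ∀ n : ℕ,
      formulaM n ⌈s * (n:ℝ)⌉₊ p
        ({Q | ∀ σ τ : Fin n → Bool, (∀ j, xorSat (Q j) σ) → (∀ j, xorSat (Q j) τ) →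
          σ ≠ τ → c * n ≤ (hammingDist σ τ : ℝ)}ᶜ)
      ≤ ENNReal.ofReal
        (((Finset.univ.filter fun D : Fin n → Bool =>
            1 ≤ wt D ∧ wt D ≤ ⌊c * (n:ℝ)⌋₊).card : ℝ) * (1-p) ^ (⌈s * (n:ℝ)⌉₊ : ℕ)) := by
    intro n
    set m := ⌈s * (n:ℝ)⌉₊ with hm_def
    set K := ⌊c * (n:ℝ)⌋₊ with hK_def
    set 𝒟 := Finset.univ.filter fun D : Fin n → Bool => 1 ≤ wt D ∧ wt D ≤ K with h𝒟
    have hsub : {Q : Fin m → (Fin n → Bool) × Bool |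
          ∀ σ τ : Fin n → Bool, (∀ j, xorSat (Q j) σ) → (∀ j, xorSat (Q j) τ) →
            σ ≠ τ → c * n ≤ (hammingDist σ τ : ℝ)}ᶜ
        ⊆ ⋃ D ∈ 𝒟, {Q : Fin m → (Fin n → Bool) × Bool |
            ∀ j, Even (∑ i, if (Q j).1 i && D i then (1:ℕ) else 0)} := by
      intro Q hQ
      simp only [Set.mem_compl_iff, Set.mem_setOf_eq] at hQ
      push_neg at hQ
      obtain ⟨σ, τ, hσ, hτ, hστ, hdist⟩ := hQ
      set D : Fin n → Bool := fun i => σ i != τ i with hD_def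
      have hwt : wt D = hammingDist σ τ := by
        simp only [wt, hammingDist]
        congr 1
        apply Finset.filter_congr
        intro i _
        simp [hD_def, bne_iff_ne]
      have hD1 : 1 ≤ wt D := by
        obtain ⟨i, hi⟩ := Function.ne_iff.mp hστ
        refine Nat.one_le_iff_ne_zero.mpr (Finset.card_ne_zero_of_mem (a := i) ?_)
        simp [hD_def, bne_iff_ne, hi]
      have hDK : wt D ≤ K := by
        rw [hK_def]
        refine Nat.le_floor ?_
        rw [hwt]
        exact le_of_lt hdist
      refine Set.mem_biUnion (Finset.mem_filter.mpr ⟨Finset.mem_univ D, hD1, hDK⟩) ?_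
      exact fun j => parity_step (Q j) σ τ (hσ j) (hτ j)
    refine (measure_mono hsub).trans ?_
    refine (measure_biUnion_finset_le 𝒟 _).trans ?_
    calc ∑ D ∈ 𝒟, formulaM n m p {Q : Fin m → (Fin n → Bool) × Bool |
            ∀ j, Even (∑ i, if (Q j).1 i && D i then (1:ℕ) else 0)}
        ≤ ∑ D ∈ 𝒟, ENNReal.ofReal (1-p) ^ m := by
          refine Finset.sum_le_sum fun D hD => ?_
          exact formula_bad_le n m p hp0 hp2 D (Finset.mem_filter.mp hD).2.1
      _ = (𝒟.card : ENNReal) * ENNReal.ofReal (1-p) ^ m := by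
          rw [Finset.sum_const, nsmul_eq_mul]
      _ = ENNReal.ofReal ((𝒟.card : ℝ) * (1-p) ^ m) := by
          rw [ENNReal.ofReal_mul (Nat.cast_nonneg _), ENNReal.ofReal_natCast,
            ENNReal.ofReal_pow (by linarith)]
  have h0 : Tendsto (fun n : ℕ =>
      formulaM n ⌈s * (n:ℝ)⌉₊ p
        ({Q | ∀ σ τ : Fin n → Bool, (∀ j, xorSat (Q j) σ) → (∀ j, xorSat (Q j) τ) →
          σ ≠ τ → c * n ≤ (hammingDist σ τ : ℝ)}ᶜ)) atTop (nhds 0) := by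
    refine tendsto_of_tendsto_of_tendsto_of_le_of_le tendsto_const_nhds ?_
      (fun n => zero_le) hcompl
    have := ENNReal.tendsto_ofReal (tendsto_u s p c hs0 hp0 hp1 hc0 hchalf hγ)
    simpa using this
  have heq : ∀ n : ℕ,
      formulaM n ⌈s * (n:ℝ)⌉₊ p
        {Q | ∀ σ τ : Fin n → Bool, (∀ j, xorSat (Q j) σ) → (∀ j, xorSat (Q j) τ) →
          σ ≠ τ → c * n ≤ (hammingDist σ τ : ℝ)}
      = 1 - formulaM n ⌈s * (n:ℝ)⌉₊ p
        ({Q | ∀ σ τ : Fin n → Bool, (∀ j, xorSat (Q j) σ) → (∀ j, xorSat (Q j) τ) →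
          σ ≠ τ → c * n ≤ (hammingDist σ τ : ℝ)}ᶜ) := by
    intro n
    have hmeas : MeasurableSet {Q : Fin ⌈s * (n:ℝ)⌉₊ → (Fin n → Bool) × Bool |
        ∀ σ τ : Fin n → Bool, (∀ j, xorSat (Q j) σ) → (∀ j, xorSat (Q j) τ) →
          σ ≠ τ → c * n ≤ (hammingDist σ τ : ℝ)} := (Set.to_countable _).measurableSet
    rw [prob_compl_eq_one_sub hmeas, ENNReal.sub_sub_cancel ENNReal.one_ne_top prob_le_one]
  simp only [heq]
  have hc1 : Tendsto (fun x : ENNReal => 1 - x) (nhds 0) (nhds 1) := by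
    have := (ENNReal.continuous_sub_left (a := 1) ENNReal.one_ne_top).tendsto 0
    simpa using this
  exact hc1.comp h0
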